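/- Strict weighted Mourre estimate implies LAP along special sequences (core step of Theorem 3.4): let I be an open interval, I' a closed subinterval, B, C bounded self-adjoint with C injective, and suppose that CBС⁻¹ is bounded and the strict weighted projected Mourre estimate P⊥ E_I(H) [H, iB] E_I(H) P⊥ ≥ P⊥ E_I(H) C² E_I(H) P⊥ holds. Then every special sequence (f_n, z_n) for H associated to (I', C) satisfying E_I(H) f_n = f_n for all n has mass zero. -/

import Mathlib

open scoped InnerProductSpace Topology

/-- core step of Theorem 3.4: let `I` be an open interval, `I'` a closed
subinterval, `B, C` bounded self-adjoint with `C` injective, `C B C⁻¹` bounded (extension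
`B₁`, `B₁ ∘ C = C ∘ B`), and assume the strict weighted projected Mourre estimate
`P⊥ E_I(H) [H, iB] E_I(H) P⊥ ≥ P⊥ E_I(H) C² E_I(H) P⊥` (as forms).  Then every special
sequence `(f_n, z_n)` for `H` associated to `(I', C)` with `E_I(H) f_n = f_n` for all `n`
has mass zero. -/
theorem stmt_19 {ℋ : Type*} [NormedAddCommGroup ℋ] [InnerProductSpace ℂ ℋ] [CompleteSpace ℋ]
    (H : ℋ →ₗ.[ℂ] ℋ) (hH : IsSelfAdjoint H)
    (I I' : Set ℝ) (hI : IsOpen I) (hI' : IsClosed I') (hII' : I' ⊆ I)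
    -- `E = E_I(H)` and `P⊥ = 1 - P`, commuting orthogonal projections
    (E Pperp : ℋ →L[ℂ] ℋ)
    (hEsa : IsSelfAdjoint E) (hEidem : E ∘L E = E)
    (hPsa : IsSelfAdjoint Pperp) (hPidem : Pperp ∘L Pperp = Pperp)
    (hEP : E ∘L Pperp = Pperp ∘L E)
    (B C : ℋ →L[ℂ] ℋ) (hBsa : IsSelfAdjoint B)
    (hCsa : IsSelfAdjoint C) (hCinj : Function.Injective C)
    (B₁ : ℋ →L[ℂ] ℋ) (hB₁ : ∀ x, B₁ (C x) = C (B x))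
    -- strict weighted projected Mourre estimate `P⊥ E [H, iB] E P⊥ ≥ P⊥ E C² E P⊥`
    (hMourre : ∀ u : H.domain, E u = (u : ℋ) → Pperp u = (u : ℋ) →
        ‖C u‖ ^ 2 ≤ (Complex.I * (⟪H u, B u⟫_ℂ - ⟪B u, H u⟫_ℂ)).re)
    -- a special sequence for `H` associated to `(I', C)`, localized by `E_I(H)`
    (f : ℕ → H.domain) (z : ℕ → ℂ) (g : ℕ → ℋ) (η : ℝ) (hη : 0 ≤ η)
    (hzre : ∀ n, (z n).re ∈ I') (hzim : ∀ n, (z n).im ≠ 0)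
    (hzlim : Filter.Tendsto (fun n => (z n).im) Filter.atTop (𝓝 0))
    (hPf : ∀ n, Pperp (f n) = (f n : ℋ))
    (hEf : ∀ n, E (f n) = (f n : ℋ))
    (hg : ∀ n, C (g n) = H (f n) - z n • (f n : ℋ))
    (hglim : Filter.Tendsto (fun n => ‖g n‖) Filter.atTop (𝓝 0))
    (hmass : Filter.Tendsto (fun n => ‖C (f n)‖) Filter.atTop (𝓝 η)) :
    η = 0 := by
  classical
  -- symmetry of `H`
  have hd : LinearPMap.adjoint H = H := hH
  have hsym : H.IsFormalAdjoint H := by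
    have h1 := LinearPMap.adjoint_isFormalAdjoint (T := H) hH.dense_domain
    rwa [hd] at h1
  -- the key per-`n` estimate
  have key : ∀ n, ‖C (f n)‖ ^ 2 ≤ 2 * (‖B₁‖ + ‖B‖) * ‖g n‖ * ‖C (f n)‖ := by
    intro n
    set F : ℋ := ((f n : ℋ)) with hF
    have hHf : H (f n) = C (g n) + z n • F := by
      have h := hg n
      rw [h]; abel
    have hM := hMourre (f n) (hEf n) (hPf n)
    set c : ℂ := ⟪C (g n), B F⟫_ℂ with hcdef
    set t : ℂ := ⟪B F, F⟫_ℂ with htdef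
    have hBsym := hBsa.isSymmetric
    have hCsym := hCsa.isSymmetric
    -- `t` is real
    have ht : t.im = 0 := by
      have h1 : (starRingEnd ℂ) t = t := by
        rw [htdef, inner_conj_symm]
        exact (hBsym F F).symm
      have := congrArg Complex.im h1
      simp only [Complex.conj_im] at this
      linarith
    -- expand the commutator expression
    have expand : ⟪H (f n), B F⟫_ℂ - ⟪B F, H (f n)⟫_ℂ
        = (c - (starRingEnd ℂ) c) + ((starRingEnd ℂ) (z n) - z n) * t := by
      rw [hHf, inner_add_left, inner_add_right, inner_smul_left, inner_smul_right]
      have h1 : ⟪F, B F⟫_ℂ = t := (hBsym F F).symm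
      have h2 : ⟪B F, C (g n)⟫_ℂ = (starRingEnd ℂ) c := by
        rw [hcdef, inner_conj_symm]
      rw [h1, h2, htdef]
      ring
    have hre : (Complex.I * (⟪H (f n), B F⟫_ℂ - ⟪B F, H (f n)⟫_ℂ)).re
        = -2 * c.im + 2 * (z n).im * t.re := by
      rw [expand]
      simp only [Complex.mul_re, Complex.mul_im, Complex.add_re, Complex.add_im,
        Complex.sub_re, Complex.sub_im, Complex.I_re, Complex.I_im, Complex.conj_re,
        Complex.conj_im, ht]
      ring
    -- bound on `c`
    have hc2 : c = ⟪g n, B₁ (C F)⟫_ℂ := by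
      rw [hcdef, hB₁]
      exact hCsym (g n) (B F)
    have hcb : |c.im| ≤ ‖g n‖ * (‖B₁‖ * ‖C F‖) := by
      calc |c.im| ≤ ‖c‖ := Complex.abs_im_le_norm c
        _ = ‖c‖ := rfl
        _ ≤ ‖g n‖ * ‖B₁ (C F)‖ := by rw [hc2]; exact norm_inner_le_norm _ _
        _ ≤ ‖g n‖ * (‖B₁‖ * ‖C F‖) :=
            mul_le_mul_of_nonneg_left (B₁.le_opNorm _) (norm_nonneg _)
    -- bound on `|Im z| ‖F‖²`
    have himz : |(z n).im| * ‖F‖ ^ 2 ≤ ‖C F‖ * ‖g n‖ := by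
      have h1 : ⟪F, C (g n)⟫_ℂ = ⟪F, H (f n)⟫_ℂ - z n * (‖F‖ : ℂ) ^ 2 := by
        rw [hg n, inner_sub_right, inner_smul_right, inner_self_eq_norm_sq_to_K]
        norm_cast
      have h2 : (⟪F, H (f n)⟫_ℂ).im = 0 := by
        have hr : (starRingEnd ℂ) ⟪F, H (f n)⟫_ℂ = ⟪F, H (f n)⟫_ℂ := by
          rw [inner_conj_symm]
          exact hsym (f n) (f n)
        have := congrArg Complex.im hr
        simp only [Complex.conj_im] at this
        linarith
      have h3 : (⟪F, C (g n)⟫_ℂ).im = -((z n).im * ‖F‖ ^ 2) := by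
        rw [h1, show ((‖F‖ : ℂ)) ^ 2 = ((‖F‖ ^ 2 : ℝ) : ℂ) by push_cast; ring]
        simp only [Complex.sub_im, Complex.mul_im, h2, Complex.ofReal_re, Complex.ofReal_im]
        ring
      have h4 : ⟪F, C (g n)⟫_ℂ = ⟪C F, g n⟫_ℂ := (hCsym F (g n)).symm
      calc |(z n).im| * ‖F‖ ^ 2 = |(⟪C F, g n⟫_ℂ).im| := by
            rw [← h4, h3, abs_neg, abs_mul, abs_of_nonneg (sq_nonneg ‖F‖)]
        _ ≤ ‖⟪C F, g n⟫_ℂ‖ := Complex.abs_im_le_norm _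
        _ = ‖⟪C F, g n⟫_ℂ‖ := rfl
        _ ≤ ‖C F‖ * ‖g n‖ := norm_inner_le_norm _ _
    -- bound on `t`
    have htb : |t.re| ≤ ‖B‖ * ‖F‖ ^ 2 := by
      calc |t.re| ≤ ‖t‖ := Complex.abs_re_le_norm t
        _ = ‖t‖ := rfl
        _ ≤ ‖B F‖ * ‖F‖ := norm_inner_le_norm _ _
        _ ≤ ‖B‖ * ‖F‖ * ‖F‖ :=
            mul_le_mul_of_nonneg_right (B.le_opNorm _) (norm_nonneg _)
        _ = ‖B‖ * ‖F‖ ^ 2 := by ring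
    -- combine
    have hM' : ‖C F‖ ^ 2 ≤ -2 * c.im + 2 * (z n).im * t.re := by
      calc ‖C F‖ ^ 2 ≤ (Complex.I * (⟪H (f n), B F⟫_ℂ - ⟪B F, H (f n)⟫_ℂ)).re := hM
        _ = _ := hre
    have hzt : (z n).im * t.re ≤ ‖B‖ * (‖C F‖ * ‖g n‖) := by
      calc (z n).im * t.re ≤ |(z n).im * t.re| := le_abs_self _
        _ = |(z n).im| * |t.re| := abs_mul _ _
        _ ≤ |(z n).im| * (‖B‖ * ‖F‖ ^ 2) :=
            mul_le_mul_of_nonneg_left htb (abs_nonneg _)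
        _ = ‖B‖ * (|(z n).im| * ‖F‖ ^ 2) := by ring
        _ ≤ ‖B‖ * (‖C F‖ * ‖g n‖) :=
            mul_le_mul_of_nonneg_left himz (norm_nonneg _)
    have hcm : -c.im ≤ ‖g n‖ * (‖B₁‖ * ‖C F‖) := le_trans (neg_le_abs _) hcb
    nlinarith [hM', hzt, hcm]
  -- pass to the limit
  have hK : Filter.Tendsto (fun n => 2 * (‖B₁‖ + ‖B‖) * ‖g n‖ * ‖C (f n)‖)
      Filter.atTop (𝓝 0) := by
    have h := (hglim.const_mul (2 * (‖B₁‖ + ‖B‖))).mul hmass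
    simpa using h
  have hsq : Filter.Tendsto (fun n => ‖C (f n)‖ ^ 2) Filter.atTop (𝓝 (η ^ 2)) :=
    hmass.pow 2
  have hle : η ^ 2 ≤ 0 := le_of_tendsto_of_tendsto' hsq hK key
  have : η ^ 2 = 0 := le_antisymm hle (sq_nonneg η)
  exact pow_eq_zero_iff two_ne_zero |>.mp this
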